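/- Upper Berezin–Lieb inequality: for a self-adjoint operator H on C^{2S+1} with an upper symbol [H]_Ω (i.e., H = (2S+1)/(4π) ∫_{S²} [H]_Ω |Ω⟩⟨Ω| dΩ with [H]_Ω real), one has Tr(e^{-βH})/(2S+1) ≤ (1/(4π)) ∫_{S²} e^{-β[H]_Ω} dΩ for all β ≥ 0. -/

import Mathlib

/-- The spin-`S` Bloch coherent state for `2S = n`, expressed in the basis `|M⟩`
indexed by `k = S + M ∈ {0, …, n}`:
`|Ω⟩_k = binom(2S, S+M)^{1/2} (cos(θ/2))^{S+M} (sin(θ/2))^{S-M} e^{i(S-M)φ}`. -/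
noncomputable def coherentState (n : ℕ) (θ φ : ℝ) : Fin (n + 1) → ℂ := fun k =>
  (Real.sqrt (n.choose k) : ℂ) * (Real.cos (θ / 2) : ℂ) ^ (k : ℕ)
    * (Real.sin (θ / 2) : ℂ) ^ (n - (k : ℕ))
    * Complex.exp (Complex.I * ((n - (k : ℕ) : ℕ) : ℂ) * (φ : ℂ))

lemma fact_prod (a b : ℕ) : (a.factorial : ℂ) * ∏ j ∈ Finset.range (b + 1), ((a:ℂ) + 1 + j)
      = ((a+b+1).factorial : ℂ) := by
  induction b with
  | zero => simp [Nat.factorial_succ]; ring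
  | succ c ih =>
      rw [Finset.prod_range_succ, ← mul_assoc, ih]
      have : (a+(c+1)+1).factorial = (a+c+1).factorial * (a+c+2) := by
        rw [show a+(c+1)+1 = (a+c+1)+1 by ring, Nat.factorial_succ]; ring
      rw [this]; push_cast; ring

lemma beta_nat (a b : ℕ) : (∫ t in (0:ℝ)..1, t^a * (1-t)^b)
    = (a.factorial * b.factorial : ℝ) / (a+b+1).factorial := by
  have hre : 0 < ((a:ℂ)+1).re := by
    simp only [Complex.add_re, Complex.natCast_re, Complex.one_re]; positivity
  have h1 : Complex.betaIntegral ((a:ℂ)+1) ((b:ℂ)+1)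
      = (b.factorial : ℂ) / ∏ j ∈ Finset.range (b + 1), ((a:ℂ) + 1 + j) := by
    simpa using Complex.betaIntegral_eval_nat_add_one_right hre b
  have hprod_ne : (∏ j ∈ Finset.range (b + 1), ((a:ℂ) + 1 + j)) ≠ 0 := by
    apply Finset.prod_ne_zero_iff.2
    intro j _
    have h0 : (0:ℝ) < (a:ℝ) + 1 + j := by positivity
    intro h
    have := congrArg Complex.re h
    simp at this; linarith
  have hfa : (a.factorial : ℂ) ≠ 0 := by exact_mod_cast Nat.cast_ne_zero.2 a.factorial_ne_zero
  have h2 : Complex.betaIntegral ((a:ℂ)+1) ((b:ℂ)+1)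
      = (((a.factorial * b.factorial : ℝ) / (a+b+1).factorial : ℝ) : ℂ) := by
    rw [h1]
    push_cast
    rw [← fact_prod a b]
    field_simp
  have h3 : Complex.betaIntegral ((a:ℂ)+1) ((b:ℂ)+1)
      = ((∫ t in (0:ℝ)..1, t^a * (1-t)^b : ℝ) : ℂ) := by
    rw [Complex.betaIntegral, ← intervalIntegral.integral_ofReal]
    refine intervalIntegral.integral_congr fun x hx => ?_
    rw [add_sub_cancel_right, add_sub_cancel_right, Complex.cpow_natCast, Complex.cpow_natCast]
    push_cast
    ring
  rw [h3] at h2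
  exact_mod_cast h2


open intervalIntegral Real Complex in
lemma phi_integral {m : ℤ} (hm : m ≠ 0) :
    (∫ φ in (0:ℝ)..(2*Real.pi), Complex.exp (Complex.I * m * φ)) = 0 := by
  have hc : (Complex.I * m) ≠ 0 := by
    simp [Complex.I_ne_zero, hm]
  have := integral_exp_mul_complex (a := 0) (b := 2*Real.pi) hc
  rw [this]
  have h1 : Complex.I * (m:ℂ) * ((2*Real.pi : ℝ):ℂ) = (m:ℤ) * (2*(Real.pi:ℂ)*Complex.I) := by
    push_cast; ring
  rw [h1, Complex.exp_int_mul_two_pi_mul_I]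
  simp

lemma coh_cont (n : ℕ) (k : Fin (n+1)) :
    Continuous fun p : ℝ × ℝ => coherentState n p.1 p.2 k := by
  unfold coherentState
  fun_prop

lemma normSq_coh (n : ℕ) (θ φ : ℝ) (k : Fin (n+1)) :
    Complex.normSq (coherentState n θ φ k)
      = n.choose k * (Real.cos (θ/2)^2)^(k:ℕ) * (Real.sin (θ/2)^2)^(n-(k:ℕ)) := by
  unfold coherentState
  rw [map_mul, map_mul, map_mul]
  have h1 : Complex.normSq (Complex.exp (Complex.I * ((n - (k:ℕ) : ℕ) : ℂ) * (φ:ℂ))) = 1 := by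
    rw [Complex.normSq_eq_norm_sq, Complex.norm_exp]
    have : (Complex.I * ((n - (k:ℕ) : ℕ) : ℂ) * (φ:ℂ)).re = 0 := by
      simp [Complex.mul_re, Complex.mul_im]
    rw [this]; simp
  rw [h1, mul_one]
  rw [← Complex.ofReal_pow, ← Complex.ofReal_pow, Complex.normSq_ofReal, Complex.normSq_ofReal,
    Complex.normSq_ofReal]
  have hs : Real.sqrt (n.choose k) * Real.sqrt (n.choose k) = n.choose k :=
    Real.mul_self_sqrt (by positivity)
  calc √(n.choose k) * √(n.choose k) * (Real.cos (θ / 2) ^ (k:ℕ) * Real.cos (θ / 2) ^ (k:ℕ)) *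
      (Real.sin (θ / 2) ^ (n - (k:ℕ)) * Real.sin (θ / 2) ^ (n - (k:ℕ)))
      = (√(n.choose k) * √(n.choose k)) * (Real.cos (θ/2)^2)^(k:ℕ) * (Real.sin (θ/2)^2)^(n-(k:ℕ)) := by
        ring
    _ = n.choose k * (Real.cos (θ/2)^2)^(k:ℕ) * (Real.sin (θ/2)^2)^(n-(k:ℕ)) := by rw [hs]

lemma sum_normSq_coh (n : ℕ) (θ φ : ℝ) :
    ∑ k : Fin (n+1), Complex.normSq (coherentState n θ φ k) = 1 := by
  simp_rw [normSq_coh]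
  rw [Fin.sum_univ_eq_sum_range (fun k => (n.choose k : ℝ) * (Real.cos (θ/2)^2)^k * (Real.sin (θ/2)^2)^(n-k))]
  have := add_pow (Real.cos (θ/2)^2) (Real.sin (θ/2)^2) n
  rw [Real.cos_sq_add_sin_sq, one_pow] at this
  rw [this]
  apply Finset.sum_congr rfl
  intro k _
  ring
lemma theta_integral (a b : ℕ) :
    (∫ θ in (0:ℝ)..Real.pi, Real.sin θ * (Real.cos (θ/2)^2)^b * (Real.sin (θ/2)^2)^a)
      = 2 * (a.factorial * b.factorial) / (a+b+1).factorial := by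
  have hderiv : ∀ θ ∈ Set.uIcc (0:ℝ) Real.pi,
      HasDerivAt (fun θ : ℝ => Real.sin (θ/2)^2)
        (Real.sin (θ/2) * Real.cos (θ/2)) θ := by
    intro θ _
    have h1 : HasDerivAt (fun θ : ℝ => θ/2) (1/2) θ := (hasDerivAt_id θ).div_const 2
    have h2 : HasDerivAt (fun θ : ℝ => Real.sin (θ/2)) (Real.cos (θ/2) * (1/2)) θ :=
      HasDerivAt.comp (h₂ := Real.sin) θ (Real.hasDerivAt_sin (θ/2)) h1
    have := h2.fun_pow 2
    refine this.congr_deriv ?_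
    ring
  have hcont : ContinuousOn (fun θ : ℝ => Real.sin (θ/2) * Real.cos (θ/2)) (Set.uIcc 0 Real.pi) :=
    (Continuous.mul (by fun_prop) (by fun_prop)).continuousOn
  have hg : Continuous (fun t : ℝ => t^a * (1-t)^b) := by fun_prop
  have hsub := intervalIntegral.integral_comp_smul_deriv hderiv hcont hg
  have hf0 : Real.sin ((0:ℝ)/2)^2 = 0 := by norm_num
  have hfπ : Real.sin (Real.pi/2)^2 = 1 := by rw [Real.sin_pi_div_two]; norm_num
  rw [hf0, hfπ] at hsub
  have key : (∫ θ in (0:ℝ)..Real.pi, Real.sin θ * (Real.cos (θ/2)^2)^b * (Real.sin (θ/2)^2)^a)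
      = 2 * ∫ θ in (0:ℝ)..Real.pi,
          (Real.sin (θ/2) * Real.cos (θ/2)) •
            (((fun t : ℝ => t^a*(1-t)^b) ∘ fun θ : ℝ => Real.sin (θ/2)^2) θ) := by
    rw [← intervalIntegral.integral_const_mul]
    apply intervalIntegral.integral_congr
    intro θ _
    simp only [Function.comp_apply, smul_eq_mul]
    have hsin : Real.sin θ = 2 * (Real.sin (θ/2) * Real.cos (θ/2)) := by
      have h := Real.sin_two_mul (θ/2)
      rw [show 2*(θ/2) = θ by ring] at h
      rw [h]; ring
    show Real.sin θ * (Real.cos (θ/2)^2)^b * (Real.sin (θ/2)^2)^a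
      = 2 * ((Real.sin (θ/2) * Real.cos (θ/2)) • ((Real.sin (θ/2)^2)^a * (1 - Real.sin (θ/2)^2)^b))
    rw [hsin, ← Real.cos_sq']
    simp only [smul_eq_mul]
    ring
  rw [key, hsub, beta_nat a b]
  ring
lemma coh_prod (n : ℕ) (θ φ : ℝ) (j k : Fin (n+1)) :
    coherentState n θ φ j * (starRingEnd ℂ) (coherentState n θ φ k)
    = ((Real.sqrt (n.choose j) * Real.sqrt (n.choose k)
        * Real.cos (θ/2)^((j:ℕ)+(k:ℕ)) * Real.sin (θ/2)^((n-(j:ℕ))+(n-(k:ℕ))) : ℝ) : ℂ)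
      * Complex.exp (Complex.I * (((n-(j:ℕ) : ℕ) : ℤ) - ((n-(k:ℕ) : ℕ) : ℤ) : ℤ) * φ) := by
  have he : Complex.exp (Complex.I * ((n - (j:ℕ) : ℕ) : ℂ) * φ)
        * Complex.exp (-(Complex.I * ((n - (k:ℕ) : ℕ) : ℂ) * φ))
      = Complex.exp (Complex.I * ((((n-(j:ℕ) : ℕ) : ℤ) - ((n-(k:ℕ) : ℕ) : ℤ) : ℤ) : ℂ) * φ) := by
    rw [← Complex.exp_add]
    congr 1
    push_cast
    ring
  unfold coherentState
  simp only [map_mul, map_pow, Complex.conj_ofReal, ← Complex.exp_conj, map_mul,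
    Complex.conj_I, Complex.conj_natCast]
  rw [← he]
  push_cast
  ring

lemma coh_ortho (n : ℕ) (j k : Fin (n+1)) :
    (∫ θ in (0:ℝ)..Real.pi, ∫ φ in (0:ℝ)..(2*Real.pi),
       ((Real.sin θ : ℝ):ℂ) * (coherentState n θ φ j * (starRingEnd ℂ) (coherentState n θ φ k)))
    = if j = k then ((4*Real.pi/(n+1) : ℝ) : ℂ) else 0 := by
  by_cases hjk : j = k
  · subst hjk
    rw [if_pos rfl]
    have hinner : ∀ θ : ℝ, (∫ φ in (0:ℝ)..(2*Real.pi),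
        ((Real.sin θ : ℝ):ℂ) * (coherentState n θ φ j * (starRingEnd ℂ) (coherentState n θ φ j)))
        = ((2*Real.pi * (Real.sin θ * ((n.choose j : ℝ) * (Real.cos (θ/2)^2)^(j:ℕ)
            * (Real.sin (θ/2)^2)^(n-(j:ℕ)))) : ℝ) : ℂ) := by
      intro θ
      have hpt : ∀ φ : ℝ, ((Real.sin θ : ℝ):ℂ)
          * (coherentState n θ φ j * (starRingEnd ℂ) (coherentState n θ φ j))
          = (((Real.sin θ * ((n.choose j : ℝ) * (Real.cos (θ/2)^2)^(j:ℕ)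
              * (Real.sin (θ/2)^2)^(n-(j:ℕ)))) : ℝ) : ℂ) := by
        intro φ
        rw [Complex.mul_conj, normSq_coh]
        push_cast
        ring
      rw [intervalIntegral.integral_congr (g := fun _ : ℝ =>
          (((Real.sin θ * ((n.choose j : ℝ) * (Real.cos (θ/2)^2)^(j:ℕ)
            * (Real.sin (θ/2)^2)^(n-(j:ℕ)))) : ℝ) : ℂ)) (fun φ _ => hpt φ)]
      rw [intervalIntegral.integral_const, sub_zero, Complex.real_smul]
      push_cast
      ring
    rw [intervalIntegral.integral_congr (fun θ _ => hinner θ)]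
    rw [intervalIntegral.integral_ofReal]
    have hreal : (∫ θ in (0:ℝ)..Real.pi, 2*Real.pi * (Real.sin θ * ((n.choose j : ℝ)
        * (Real.cos (θ/2)^2)^(j:ℕ) * (Real.sin (θ/2)^2)^(n-(j:ℕ)))))
        = 4*Real.pi/(n+1) := by
      rw [intervalIntegral.integral_const_mul]
      have : (∫ θ in (0:ℝ)..Real.pi, Real.sin θ * ((n.choose j : ℝ)
          * (Real.cos (θ/2)^2)^(j:ℕ) * (Real.sin (θ/2)^2)^(n-(j:ℕ))))
          = (n.choose j : ℝ) * ∫ θ in (0:ℝ)..Real.pi,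
              Real.sin θ * (Real.cos (θ/2)^2)^(j:ℕ) * (Real.sin (θ/2)^2)^(n-(j:ℕ)) := by
        rw [← intervalIntegral.integral_const_mul]
        apply intervalIntegral.integral_congr
        intro θ _
        ring
      rw [this, theta_integral (n-(j:ℕ)) (j:ℕ)]
      have hj : (j:ℕ) ≤ n := Nat.lt_succ_iff.mp j.isLt
      have hnj : (n-(j:ℕ)) + (j:ℕ) + 1 = n + 1 := by omega
      rw [hnj]
      have hcf : (n.choose j : ℝ) * ((n-(j:ℕ)).factorial * (j:ℕ).factorial) = n.factorial := by
        exact_mod_cast congrArg (Nat.cast (R := ℝ))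
          (by rw [← Nat.choose_mul_factorial_mul_factorial hj]; ring)
      have hfact : ((n+1).factorial : ℝ) = (n+1) * n.factorial := by
        rw [Nat.factorial_succ]; push_cast; ring
      have hnf : (n.factorial : ℝ) ≠ 0 := by positivity
      calc 2*Real.pi * ((n.choose (j:ℕ) : ℝ) * (2 * (((n-(j:ℕ)).factorial : ℝ)
              * ((j:ℕ).factorial : ℝ)) / ((n+1).factorial : ℝ)))
          = 4*Real.pi * ((n.choose (j:ℕ) : ℝ) * (((n-(j:ℕ)).factorial : ℝ)
              * ((j:ℕ).factorial : ℝ))) / ((n+1).factorial : ℝ) := by ring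
        _ = 4*Real.pi * (n.factorial : ℝ) / (((n:ℝ)+1) * n.factorial) := by rw [hcf, hfact]
        _ = 4*Real.pi / ((n:ℝ)+1) := by
              rw [show 4*Real.pi * (n.factorial : ℝ) = 4*Real.pi * (n.factorial : ℝ) from rfl,
                mul_div_mul_right _ _ hnf]
      
    rw [hreal]
  · rw [if_neg hjk]
    have hj : (j:ℕ) ≤ n := Nat.lt_succ_iff.mp j.isLt
    have hk : (k:ℕ) ≤ n := Nat.lt_succ_iff.mp k.isLt
    have hm : ((n-(j:ℕ) : ℕ) : ℤ) - ((n-(k:ℕ) : ℕ) : ℤ) ≠ 0 := by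
      have : (j:ℕ) ≠ (k:ℕ) := fun h => hjk (Fin.ext h)
      omega
    have hinner : ∀ θ : ℝ, (∫ φ in (0:ℝ)..(2*Real.pi),
        ((Real.sin θ : ℝ):ℂ) * (coherentState n θ φ j * (starRingEnd ℂ) (coherentState n θ φ k)))
        = 0 := by
      intro θ
      simp_rw [coh_prod, ← mul_assoc]
      rw [intervalIntegral.integral_const_mul, phi_integral hm, mul_zero]
    rw [intervalIntegral.integral_congr (fun θ _ => hinner θ)]
    simp


/-- L1: expansion of |⟨a, Ω⟩|² as a double sum. -/
lemma normSq_expand (n : ℕ) (a : Fin (n+1) → ℂ) (θ φ : ℝ) :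
    ((Complex.normSq (∑ j, (starRingEnd ℂ) (a j) * coherentState n θ φ j) : ℝ) : ℂ)
    = ∑ j, ∑ k, (starRingEnd ℂ) (a j) * a k
        * (coherentState n θ φ j * (starRingEnd ℂ) (coherentState n θ φ k)) := by
  rw [← Complex.mul_conj, map_sum, Finset.sum_mul_sum]
  apply Finset.sum_congr rfl; intro j _
  apply Finset.sum_congr rfl; intro k _
  rw [map_mul, Complex.conj_conj]
  ring

/-- L3: iterated interval integral of a real function, complexified. -/
lemma iterated_ofReal (f : ℝ → ℝ → ℝ) (a b c d : ℝ) :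
    (∫ θ in a..b, ∫ φ in c..d, ((f θ φ : ℝ) : ℂ))
      = ((∫ θ in a..b, ∫ φ in c..d, f θ φ : ℝ) : ℂ) := by
  rw [← intervalIntegral.integral_ofReal]
  exact intervalIntegral.integral_congr fun θ _ => intervalIntegral.integral_ofReal



open intervalIntegral in
/-- L2: pulling the double sum out of the iterated integral. -/
lemma integral_double_sum (n : ℕ) (g : ℝ → ℝ → ℝ)
    (hg : Continuous fun p : ℝ × ℝ => g p.1 p.2) (A : Fin (n+1) → Fin (n+1) → ℂ) :
    (∫ θ in (0:ℝ)..Real.pi, ∫ φ in (0:ℝ)..(2*Real.pi),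
        ((g θ φ : ℝ) : ℂ) * ∑ j, ∑ k, A j k
          * (coherentState n θ φ j * (starRingEnd ℂ) (coherentState n θ φ k)))
    = ∑ j, ∑ k, A j k * ∫ θ in (0:ℝ)..Real.pi, ∫ φ in (0:ℝ)..(2*Real.pi),
        ((g θ φ : ℝ) : ℂ) * (coherentState n θ φ j * (starRingEnd ℂ) (coherentState n θ φ k)) := by
  have hP : ∀ (j k : Fin (n+1)), Continuous fun p : ℝ × ℝ =>
      ((g p.1 p.2 : ℝ) : ℂ) * (coherentState n p.1 p.2 j * (starRingEnd ℂ) (coherentState n p.1 p.2 k)) := by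
    intro j k
    exact (Complex.continuous_ofReal.comp hg).mul
      ((coh_cont n j).mul (Complex.continuous_conj.comp (coh_cont n k)))
  have hP1 : ∀ (θ : ℝ) (p : Fin (n+1) × Fin (n+1)), IntervalIntegrable
      (fun φ : ℝ => A p.1 p.2 * (((g θ φ : ℝ) : ℂ)
        * (coherentState n θ φ p.1 * (starRingEnd ℂ) (coherentState n θ φ p.2))))
      MeasureTheory.volume 0 (2*Real.pi) := by
    intro θ p
    exact (continuous_const.mul ((hP p.1 p.2).comp (Continuous.prodMk_right θ))).intervalIntegrable _ _
  have hC2 : ∀ (j k : Fin (n+1)), Continuous fun θ : ℝ =>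
      ∫ φ in (0:ℝ)..(2*Real.pi), ((g θ φ : ℝ) : ℂ)
        * (coherentState n θ φ j * (starRingEnd ℂ) (coherentState n θ φ k)) := by
    intro j k
    exact intervalIntegral.continuous_parametric_intervalIntegral_of_continuous'
      (f := fun θ φ => ((g θ φ : ℝ) : ℂ)
        * (coherentState n θ φ j * (starRingEnd ℂ) (coherentState n θ φ k)))
      (by exact hP j k) _ _
  have hP2 : ∀ (p : Fin (n+1) × Fin (n+1)), IntervalIntegrable
      (fun θ : ℝ => A p.1 p.2 * ∫ φ in (0:ℝ)..(2*Real.pi), ((g θ φ : ℝ) : ℂ)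
        * (coherentState n θ φ p.1 * (starRingEnd ℂ) (coherentState n θ φ p.2)))
      MeasureTheory.volume 0 Real.pi := by
    intro p
    exact (continuous_const.mul (hC2 p.1 p.2)).intervalIntegrable _ _
  have hpt : ∀ θ φ, ((g θ φ : ℝ) : ℂ) * ∑ j, ∑ k, A j k
        * (coherentState n θ φ j * (starRingEnd ℂ) (coherentState n θ φ k))
      = ∑ p : Fin (n+1) × Fin (n+1), A p.1 p.2 * (((g θ φ : ℝ) : ℂ)
        * (coherentState n θ φ p.1 * (starRingEnd ℂ) (coherentState n θ φ p.2))) := by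
    intro θ φ
    rw [Fintype.sum_prod_type]
    simp only [Finset.mul_sum]
    apply Finset.sum_congr rfl; intro j _
    apply Finset.sum_congr rfl; intro k _
    ring
  have hinner : ∀ θ, (∫ φ in (0:ℝ)..(2*Real.pi), ((g θ φ : ℝ) : ℂ) * ∑ j, ∑ k, A j k
        * (coherentState n θ φ j * (starRingEnd ℂ) (coherentState n θ φ k)))
      = ∑ p : Fin (n+1) × Fin (n+1), A p.1 p.2 * ∫ φ in (0:ℝ)..(2*Real.pi), ((g θ φ : ℝ) : ℂ)
          * (coherentState n θ φ p.1 * (starRingEnd ℂ) (coherentState n θ φ p.2)) := by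
    intro θ
    rw [intervalIntegral.integral_congr (fun φ _ => hpt θ φ)]
    rw [intervalIntegral.integral_finset_sum (fun p _ => hP1 θ p)]
    apply Finset.sum_congr rfl; intro p _
    exact intervalIntegral.integral_const_mul _ _
  rw [intervalIntegral.integral_congr (fun θ _ => hinner θ)]
  rw [intervalIntegral.integral_finset_sum (fun p _ => hP2 p)]
  rw [Fintype.sum_prod_type]
  apply Finset.sum_congr rfl; intro j _
  apply Finset.sum_congr rfl; intro k _
  exact intervalIntegral.integral_const_mul _ _


lemma double_congr (f g : ℝ → ℝ → ℝ) (a b c d : ℝ) (h : ∀ θ φ, f θ φ = g θ φ) :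
    (∫ θ in a..b, ∫ φ in c..d, f θ φ) = ∫ θ in a..b, ∫ φ in c..d, g θ φ :=
  intervalIntegral.integral_congr fun θ _ =>
    intervalIntegral.integral_congr fun φ _ => h θ φ

lemma double_mono (F G : ℝ → ℝ → ℝ)
    (hF : Continuous fun p : ℝ × ℝ => F p.1 p.2) (hG : Continuous fun p : ℝ × ℝ => G p.1 p.2)
    (h : ∀ θ ∈ Set.Icc (0:ℝ) Real.pi, ∀ φ ∈ Set.Icc (0:ℝ) (2*Real.pi), F θ φ ≤ G θ φ) :
    (∫ θ in (0:ℝ)..Real.pi, ∫ φ in (0:ℝ)..(2*Real.pi), F θ φ)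
      ≤ ∫ θ in (0:ℝ)..Real.pi, ∫ φ in (0:ℝ)..(2*Real.pi), G θ φ := by
  have hπ := Real.pi_pos
  have hFc : Continuous fun θ : ℝ => ∫ φ in (0:ℝ)..(2*Real.pi), F θ φ :=
    intervalIntegral.continuous_parametric_intervalIntegral_of_continuous'
      (by exact hF) _ _
  have hGc : Continuous fun θ : ℝ => ∫ φ in (0:ℝ)..(2*Real.pi), G θ φ :=
    intervalIntegral.continuous_parametric_intervalIntegral_of_continuous'
      (by exact hG) _ _
  apply intervalIntegral.integral_mono_on (by linarith) (hFc.intervalIntegrable _ _)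
    (hGc.intervalIntegrable _ _)
  intro θ hθ
  have hFθ : Continuous fun φ : ℝ => F θ φ := hF.comp (Continuous.prodMk_right θ)
  have hGθ : Continuous fun φ : ℝ => G θ φ := hG.comp (Continuous.prodMk_right θ)
  apply intervalIntegral.integral_mono_on (by linarith)
    (hFθ.intervalIntegrable _ _) (hGθ.intervalIntegrable _ _)
  intro φ hφ
  exact h θ hθ φ hφ

lemma double_linear (f g : ℝ → ℝ → ℝ)
    (hf : Continuous fun p : ℝ × ℝ => f p.1 p.2) (hg : Continuous fun p : ℝ × ℝ => g p.1 p.2)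
    (A B : ℝ) :
    (∫ θ in (0:ℝ)..Real.pi, ∫ φ in (0:ℝ)..(2*Real.pi), A * f θ φ - B * g θ φ)
      = A * (∫ θ in (0:ℝ)..Real.pi, ∫ φ in (0:ℝ)..(2*Real.pi), f θ φ)
        - B * (∫ θ in (0:ℝ)..Real.pi, ∫ φ in (0:ℝ)..(2*Real.pi), g θ φ) := by
  have hfc : Continuous fun θ : ℝ => ∫ φ in (0:ℝ)..(2*Real.pi), f θ φ :=
    intervalIntegral.continuous_parametric_intervalIntegral_of_continuous'
      (by exact hf) _ _
  have hgc : Continuous fun θ : ℝ => ∫ φ in (0:ℝ)..(2*Real.pi), g θ φ :=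
    intervalIntegral.continuous_parametric_intervalIntegral_of_continuous'
      (by exact hg) _ _
  have hinner : ∀ θ : ℝ, (∫ φ in (0:ℝ)..(2*Real.pi), A * f θ φ - B * g θ φ)
      = A * (∫ φ in (0:ℝ)..(2*Real.pi), f θ φ) - B * (∫ φ in (0:ℝ)..(2*Real.pi), g θ φ) := by
    intro θ
    have hfθ : Continuous fun φ : ℝ => f θ φ := hf.comp (Continuous.prodMk_right θ)
    have hgθ : Continuous fun φ : ℝ => g θ φ := hg.comp (Continuous.prodMk_right θ)
    rw [intervalIntegral.integral_sub
      ((hfθ.intervalIntegrable _ _).const_mul A)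
      ((hgθ.intervalIntegrable _ _).const_mul B),
      intervalIntegral.integral_const_mul, intervalIntegral.integral_const_mul]
  rw [intervalIntegral.integral_congr (fun θ _ => hinner θ)]
  rw [intervalIntegral.integral_sub
    ((hfc.intervalIntegrable _ _).const_mul A)
    ((hgc.intervalIntegrable _ _).const_mul B),
    intervalIntegral.integral_const_mul, intervalIntegral.integral_const_mul]

lemma double_sum_swap {m : ℕ} (f : Fin m → ℝ → ℝ → ℝ)
    (hf : ∀ i, Continuous fun p : ℝ × ℝ => f i p.1 p.2) :
    (∫ θ in (0:ℝ)..Real.pi, ∫ φ in (0:ℝ)..(2*Real.pi), ∑ i, f i θ φ)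
      = ∑ i, ∫ θ in (0:ℝ)..Real.pi, ∫ φ in (0:ℝ)..(2*Real.pi), f i θ φ := by
  have hfc : ∀ i, Continuous fun θ : ℝ => ∫ φ in (0:ℝ)..(2*Real.pi), f i θ φ := fun i =>
    intervalIntegral.continuous_parametric_intervalIntegral_of_continuous'
      (by exact hf i) _ _
  have hinner : ∀ θ : ℝ, (∫ φ in (0:ℝ)..(2*Real.pi), ∑ i, f i θ φ)
      = ∑ i, ∫ φ in (0:ℝ)..(2*Real.pi), f i θ φ := by
    intro θ
    refine intervalIntegral.integral_finset_sum fun i _ => ?_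
    have hfθ : Continuous fun φ : ℝ => f i θ φ := (hf i).comp (Continuous.prodMk_right θ)
    exact hfθ.intervalIntegrable _ _
  rw [intervalIntegral.integral_congr (fun θ _ => hinner θ)]
  exact intervalIntegral.integral_finset_sum fun i _ => (hfc i).intervalIntegrable _ _

/-- L4: the weighted double integral of `|⟨a,Ω⟩|²` as a matrix-element sum. -/
lemma weighted_integral (n : ℕ) (g : ℝ → ℝ → ℝ)
    (hg : Continuous fun p : ℝ × ℝ => g p.1 p.2) (a : Fin (n+1) → ℂ) :
    ((∫ θ in (0:ℝ)..Real.pi, ∫ φ in (0:ℝ)..(2*Real.pi), g θ φ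
        * Complex.normSq (∑ j, (starRingEnd ℂ) (a j) * coherentState n θ φ j) : ℝ) : ℂ)
    = ∑ j, ∑ k, (starRingEnd ℂ) (a j) * a k
        * ∫ θ in (0:ℝ)..Real.pi, ∫ φ in (0:ℝ)..(2*Real.pi),
          ((g θ φ : ℝ) : ℂ) * (coherentState n θ φ j * (starRingEnd ℂ) (coherentState n θ φ k)) := by
  rw [← iterated_ofReal]
  have hpt : ∀ θ φ : ℝ, ((g θ φ
        * Complex.normSq (∑ j, (starRingEnd ℂ) (a j) * coherentState n θ φ j) : ℝ) : ℂ)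
      = ((g θ φ : ℝ) : ℂ) * ∑ j, ∑ k, (starRingEnd ℂ) (a j) * a k
          * (coherentState n θ φ j * (starRingEnd ℂ) (coherentState n θ φ k)) := by
    intro θ φ
    rw [Complex.ofReal_mul, normSq_expand]
  rw [intervalIntegral.integral_congr (fun θ _ =>
    intervalIntegral.integral_congr (fun φ _ => hpt θ φ))]
  exact integral_double_sum n g hg _

/-- L5: resolution of the identity, integrated against `|⟨a,Ω⟩|²`. -/
lemma resolution (n : ℕ) (a : Fin (n+1) → ℂ) :
    (∫ θ in (0:ℝ)..Real.pi, ∫ φ in (0:ℝ)..(2*Real.pi), Real.sin θ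
       * Complex.normSq (∑ j, (starRingEnd ℂ) (a j) * coherentState n θ φ j))
    = 4*Real.pi/(n+1) * ∑ j, Complex.normSq (a j) := by
  have h := weighted_integral n (fun θ _ => Real.sin θ)
    (Real.continuous_sin.comp continuous_fst) a
  simp only [coh_ortho n] at h
  have h2 : ∀ j : Fin (n+1), ∑ k, (starRingEnd ℂ) (a j) * a k
      * (if j = k then ((4*Real.pi/(n+1) : ℝ) : ℂ) else 0)
      = ((Complex.normSq (a j) * (4*Real.pi/(n+1)) : ℝ) : ℂ) := by
    intro j
    rw [Finset.sum_eq_single j]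
    · rw [if_pos rfl, mul_comm ((starRingEnd ℂ) (a j)) (a j), Complex.mul_conj]
      push_cast; ring
    · intro k _ hk; rw [if_neg (fun h' => hk h'.symm), mul_zero]
    · intro h'; exact absurd (Finset.mem_univ j) h'
  rw [Finset.sum_congr rfl (fun j _ => h2 j)] at h
  rw [← Complex.ofReal_sum] at h
  have := Complex.ofReal_injective h
  rw [this, ← Finset.sum_mul]
  ring

/-- `|⟨a|Ω⟩|²` as a real weight function. -/
noncomputable def cohW (n : ℕ) (a : Fin (n+1) → ℂ) (θ φ : ℝ) : ℝ :=
  Complex.normSq (∑ j, (starRingEnd ℂ) (a j) * coherentState n θ φ j)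

lemma cohW_cont (n : ℕ) (a : Fin (n+1) → ℂ) :
    Continuous fun p : ℝ × ℝ => cohW n a p.1 p.2 := by
  unfold cohW
  exact Complex.continuous_normSq.comp
    (continuous_finset_sum _ fun j _ => continuous_const.mul (coh_cont n j))

lemma cohW_nonneg (n : ℕ) (a : Fin (n+1) → ℂ) (θ φ : ℝ) : 0 ≤ cohW n a θ φ :=
  Complex.normSq_nonneg _

lemma resolution' (n : ℕ) (a : Fin (n+1) → ℂ) (ha : ∑ j, Complex.normSq (a j) = 1) :
    (∫ θ in (0:ℝ)..Real.pi, ∫ φ in (0:ℝ)..(2*Real.pi), Real.sin θ * cohW n a θ φ)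
    = 4*Real.pi/(n+1) := by
  have h := resolution n a
  rw [ha, mul_one] at h
  exact h

/-- completeness: summing the weights over an orthonormal basis gives `1`. -/
lemma sum_cohW (n : ℕ) (b : OrthonormalBasis (Fin (n+1)) ℂ (EuclideanSpace ℂ (Fin (n+1))))
    (θ φ : ℝ) : ∑ i, cohW n (fun j => b i j) θ φ = 1 := by
  have hcomp : ∀ j k : Fin (n+1), (∑ i, (starRingEnd ℂ) (b i j) * b i k)
      = if j = k then 1 else 0 := by
    intro j k
    have h := b.sum_inner_mul_inner (EuclideanSpace.single k (1:ℂ)) (EuclideanSpace.single j 1)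
    simp only [EuclideanSpace.inner_single_left, EuclideanSpace.inner_single_right,
      EuclideanSpace.single_apply, map_one, one_mul, mul_one,
      apply_ite (starRingEnd ℂ), map_zero] at h
    rw [← h]
    exact Finset.sum_congr rfl fun i _ => mul_comm _ _
  have hC : ((∑ i, cohW n (fun j => b i j) θ φ : ℝ) : ℂ) = ((1:ℝ):ℂ) := by
    rw [Complex.ofReal_sum]
    unfold cohW
    calc ∑ i, ((Complex.normSq (∑ j, (starRingEnd ℂ) (b i j) * coherentState n θ φ j) : ℝ) : ℂ)
        = ∑ i, ∑ j, ∑ k, (starRingEnd ℂ) (b i j) * b i k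
            * (coherentState n θ φ j * (starRingEnd ℂ) (coherentState n θ φ k)) := by
          exact Finset.sum_congr rfl fun i _ => normSq_expand n (fun j => b i j) θ φ
      _ = ∑ j, ∑ k, (∑ i, (starRingEnd ℂ) (b i j) * b i k)
            * (coherentState n θ φ j * (starRingEnd ℂ) (coherentState n θ φ k)) := by
          rw [Finset.sum_comm]
          apply Finset.sum_congr rfl; intro j _
          rw [Finset.sum_comm]
          apply Finset.sum_congr rfl; intro k _
          rw [Finset.sum_mul]
      _ = ∑ j, coherentState n θ φ j * (starRingEnd ℂ) (coherentState n θ φ j) := by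
          apply Finset.sum_congr rfl; intro j _
          rw [Finset.sum_eq_single j]
          · rw [hcomp j j, if_pos rfl, one_mul]
          · intro k _ hk
            rw [hcomp j k, if_neg (fun h' => hk h'.symm), zero_mul]
          · intro h'; exact absurd (Finset.mem_univ j) h'
      _ = ∑ j, ((Complex.normSq (coherentState n θ φ j) : ℝ) : ℂ) := by
          apply Finset.sum_congr rfl; intro j _
          rw [Complex.mul_conj]
      _ = ((1:ℝ):ℂ) := by rw [← Complex.ofReal_sum, sum_normSq_coh]
  exact_mod_cast hC

open Real in
/-- The per-eigenvector Berezin–Lieb bound via the tangent-line trick. -/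
lemma per_vector (n : ℕ) (u : ℝ → ℝ → ℝ) (hu : Continuous fun p : ℝ × ℝ => u p.1 p.2)
    (β : ℝ) (a : Fin (n+1) → ℂ) (L : ℝ)
    (hres : (∫ θ in (0:ℝ)..Real.pi, ∫ φ in (0:ℝ)..(2*Real.pi),
        Real.sin θ * cohW n a θ φ) = 4*Real.pi/(n+1))
    (hsym : (∫ θ in (0:ℝ)..Real.pi, ∫ φ in (0:ℝ)..(2*Real.pi),
        Real.sin θ * (u θ φ * cohW n a θ φ)) = 4*Real.pi/(n+1) * L) :
    Real.exp (-β * L) ≤ ((n:ℝ)+1)/(4*Real.pi)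
      * ∫ θ in (0:ℝ)..Real.pi, ∫ φ in (0:ℝ)..(2*Real.pi),
          Real.sin θ * (Real.exp (-β * u θ φ) * cohW n a θ φ) := by
  have hπ := Real.pi_pos
  have hw := cohW_cont n a
  set E := Real.exp (-β * L) with hE
  have hsin : Continuous fun p : ℝ × ℝ => Real.sin p.1 :=
    Real.continuous_sin.comp continuous_fst
  have hF : Continuous fun p : ℝ × ℝ =>
      (E*(1+β*L)) * (Real.sin p.1 * cohW n a p.1 p.2)
        - (β*E) * (Real.sin p.1 * (u p.1 p.2 * cohW n a p.1 p.2)) :=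
    (continuous_const.mul (hsin.mul hw)).sub
      (continuous_const.mul (hsin.mul (hu.mul hw)))
  have hG : Continuous fun p : ℝ × ℝ =>
      Real.sin p.1 * (Real.exp (-β * u p.1 p.2) * cohW n a p.1 p.2) :=
    hsin.mul ((Real.continuous_exp.comp (continuous_const.mul hu)).mul hw)
  have hpt : ∀ θ ∈ Set.Icc (0:ℝ) Real.pi, ∀ φ ∈ Set.Icc (0:ℝ) (2*Real.pi),
      (E*(1+β*L)) * (Real.sin θ * cohW n a θ φ)
        - (β*E) * (Real.sin θ * (u θ φ * cohW n a θ φ))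
      ≤ Real.sin θ * (Real.exp (-β * u θ φ) * cohW n a θ φ) := by
    intro θ hθ φ _
    have hs : 0 ≤ Real.sin θ := Real.sin_nonneg_of_nonneg_of_le_pi hθ.1 hθ.2
    have hwn := cohW_nonneg n a θ φ
    have hconv : E * (1 + (β*L - β*u θ φ)) ≤ Real.exp (-β * u θ φ) := by
      have h1 : (β*L - β*u θ φ) + 1 ≤ Real.exp (β*L - β*u θ φ) := Real.add_one_le_exp _
      have h2 : E * Real.exp (β*L - β*u θ φ) = Real.exp (-β*u θ φ) := by
        rw [hE, ← Real.exp_add]; congr 1; ring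
      calc E * (1 + (β*L - β*u θ φ)) ≤ E * Real.exp (β*L - β*u θ φ) :=
            mul_le_mul_of_nonneg_left (by linarith) (le_of_lt (Real.exp_pos _))
        _ = _ := h2
    nlinarith [mul_le_mul_of_nonneg_left hconv (mul_nonneg hs hwn)]
  have h1 := double_mono _ _ hF hG hpt
  rw [double_linear (fun θ φ => Real.sin θ * cohW n a θ φ)
    (fun θ φ => Real.sin θ * (u θ φ * cohW n a θ φ))
    (hsin.mul hw) (hsin.mul (hu.mul hw)) (E*(1+β*L)) (β*E)] at h1
  rw [hres, hsym] at h1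
  have h3 : E*(1+β*L)*(4*Real.pi/(n+1)) - β*E*(4*Real.pi/(n+1)*L)
      = (4*Real.pi/((n:ℝ)+1))*E := by ring
  rw [h3] at h1
  calc E = ((n:ℝ)+1)/(4*Real.pi) * ((4*Real.pi/((n:ℝ)+1))*E) := by
        field_simp
    _ ≤ _ := mul_le_mul_of_nonneg_left h1 (by positivity)

open Matrix in
/-- Upper Berezin–Lieb inequality: if `H` is a self-adjoint operator on `ℂ^{2S+1}`
(with `2S = n`) with (continuous, real-valued) upper symbol `u`, i.e.
`H = (2S+1)/(4π) ∫_{S²} u(Ω) |Ω⟩⟨Ω| dΩ`, then for all `β ≥ 0`,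
`Tr(e^{-βH})/(2S+1) ≤ (1/(4π)) ∫_{S²} e^{-β u(Ω)} dΩ`, the sphere being parametrized
by spherical angles `(θ,φ)` with surface measure `sinθ dθ dφ`. -/
theorem upper_berezin_lieb (n : ℕ) (H : Matrix (Fin (n + 1)) (Fin (n + 1)) ℂ)
    (hH : H.IsHermitian) (u : ℝ → ℝ → ℝ)
    (hu : Continuous fun p : ℝ × ℝ => u p.1 p.2)
    (hupper : ∀ j k, H j k
      = (((n : ℂ) + 1) / (4 * (Real.pi : ℂ)))
        * ∫ θ in (0 : ℝ)..Real.pi, ∫ φ in (0 : ℝ)..(2 * Real.pi),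
            ((Real.sin θ : ℝ) : ℂ) * ((u θ φ : ℝ) : ℂ)
              * (coherentState n θ φ j * (starRingEnd ℂ) (coherentState n θ φ k)))
    (β : ℝ) (hβ : 0 ≤ β) :
    (NormedSpace.exp ((-β : ℂ) • H)).trace.re / ((n : ℝ) + 1)
      ≤ (1 / (4 * Real.pi))
        * ∫ θ in (0 : ℝ)..Real.pi, ∫ φ in (0 : ℝ)..(2 * Real.pi),
            Real.sin θ * Real.exp (-β * u θ φ) := by
  have hπ := Real.pi_pos
  -- the trace of the exponential
  have htrace : (NormedSpace.exp ((-β : ℂ) • H)).trace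
      = ∑ i, Complex.exp (-(β:ℂ) * hH.eigenvalues i) := by
    set U : Matrix (Fin (n+1)) (Fin (n+1)) ℂ :=
      (hH.eigenvectorUnitary : Matrix (Fin (n+1)) (Fin (n+1)) ℂ) with hU
    have hUU : star U * U = 1 := mem_unitaryGroup_iff'.mp hH.eigenvectorUnitary.2
    have hUinv : U⁻¹ = star U := inv_eq_left_inv hUU
    have hUunit : IsUnit U :=
      (isUnit_iff_isUnit_det U).mpr (UnitaryGroup.det_isUnit hH.eigenvectorUnitary)
    have hs : (-β : ℂ) • H
        = U * Matrix.diagonal (fun i => (-β : ℂ) * (hH.eigenvalues i : ℂ)) * U⁻¹ := by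
      rw [hUinv]
      conv_lhs => rw [hH.spectral_theorem, Unitary.conjStarAlgAut_apply]
      rw [← smul_mul_assoc, ← mul_smul_comm, ← diagonal_smul]
      rfl
    rw [hs, Matrix.exp_conj U _ hUunit, Matrix.exp_diagonal]
    rw [trace_mul_comm, ← mul_assoc, hUinv, hUU, one_mul, trace_diagonal]
    congr 1
    ext i
    simp [Pi.exp_def, Complex.exp_eq_exp_ℂ]
  have htrre : (NormedSpace.exp ((-β : ℂ) • H)).trace.re
      = ∑ i, Real.exp (-β * hH.eigenvalues i) := by
    rw [htrace]
    have h : ∀ i : Fin (n+1), Complex.exp (-(β:ℂ) * hH.eigenvalues i)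
        = ((Real.exp (-β * hH.eigenvalues i) : ℝ) : ℂ) := by
      intro i
      rw [Complex.ofReal_exp]
      congr 1
      push_cast
      ring
    rw [Finset.sum_congr rfl (fun i _ => h i), ← Complex.ofReal_sum, Complex.ofReal_re]
  -- basis facts
  have hone : ∀ i, (∑ j, (starRingEnd ℂ) (hH.eigenvectorBasis i j) * hH.eigenvectorBasis i j)
      = 1 := by
    intro i
    have h := orthonormal_iff_ite.mp hH.eigenvectorBasis.orthonormal i i
    rw [if_pos rfl, EuclideanSpace.inner_eq_star_dotProduct] at h
    simpa [dotProduct, mul_comm] using h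
  have hnorm : ∀ i, (∑ j, Complex.normSq (hH.eigenvectorBasis i j)) = 1 := by
    intro i
    have h := hone i
    have h2 : ∀ j : Fin (n+1), (starRingEnd ℂ) (hH.eigenvectorBasis i j) * hH.eigenvectorBasis i j
        = ((Complex.normSq (hH.eigenvectorBasis i j) : ℝ) : ℂ) :=
      fun j => by rw [mul_comm, Complex.mul_conj]
    rw [Finset.sum_congr rfl (fun j _ => h2 j), ← Complex.ofReal_sum] at h
    exact_mod_cast h
  have heig : ∀ i, (∑ j, (starRingEnd ℂ) (hH.eigenvectorBasis i j)
      * ∑ k, H j k * hH.eigenvectorBasis i k) = ((hH.eigenvalues i : ℝ) : ℂ) := by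
    intro i
    have hmv := hH.mulVec_eigenvectorBasis i
    have hmv' : ∀ j, (∑ k, H j k * hH.eigenvectorBasis i k)
        = ((hH.eigenvalues i : ℝ):ℂ) * hH.eigenvectorBasis i j := by
      intro j
      have h := congrFun hmv j
      simpa [Matrix.mulVec, dotProduct, Pi.smul_apply, Complex.real_smul] using h
    rw [Finset.sum_congr rfl (fun j _ => by rw [hmv' j])]
    calc ∑ j, (starRingEnd ℂ) (hH.eigenvectorBasis i j)
          * (((hH.eigenvalues i:ℝ):ℂ) * hH.eigenvectorBasis i j)
        = ((hH.eigenvalues i:ℝ):ℂ)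
            * ∑ j, (starRingEnd ℂ) (hH.eigenvectorBasis i j) * hH.eigenvectorBasis i j := by
          rw [Finset.mul_sum]; exact Finset.sum_congr rfl fun j _ => by ring
      _ = _ := by rw [hone i, mul_one]
  -- resolution of identity for each eigenvector
  have hres : ∀ i, (∫ θ in (0:ℝ)..Real.pi, ∫ φ in (0:ℝ)..(2*Real.pi),
      Real.sin θ * cohW n (fun j => hH.eigenvectorBasis i j) θ φ) = 4*Real.pi/(n+1) :=
    fun i => resolution' n _ (hnorm i)
  -- upper-symbol identity for each eigenvector
  have hsym : ∀ i, (∫ θ in (0:ℝ)..Real.pi, ∫ φ in (0:ℝ)..(2*Real.pi),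
      Real.sin θ * (u θ φ * cohW n (fun j => hH.eigenvectorBasis i j) θ φ))
      = 4*Real.pi/(n+1) * hH.eigenvalues i := by
    intro i
    have hgc : Continuous fun p : ℝ×ℝ => Real.sin p.1 * u p.1 p.2 :=
      (Real.continuous_sin.comp continuous_fst).mul hu
    have h := weighted_integral n (fun θ φ => Real.sin θ * u θ φ) hgc
      (fun j => hH.eigenvectorBasis i j)
    have hc : ((4*Real.pi/((n:ℝ)+1) : ℝ):ℂ) * (((n:ℂ)+1)/(4*(Real.pi:ℂ))) = 1 := by
      have hπ' : (Real.pi:ℂ) ≠ 0 := Complex.ofReal_ne_zero.mpr (ne_of_gt hπ)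
      have hn' : ((n:ℂ)+1) ≠ 0 := Nat.cast_add_one_ne_zero n
      push_cast
      field_simp
    have hI : ∀ j k : Fin (n+1), (∫ θ in (0:ℝ)..Real.pi, ∫ φ in (0:ℝ)..(2*Real.pi),
        ((Real.sin θ * u θ φ : ℝ):ℂ)
          * (coherentState n θ φ j * (starRingEnd ℂ) (coherentState n θ φ k)))
        = ((4*Real.pi/((n:ℝ)+1) : ℝ):ℂ) * H j k := by
      intro j k
      have hJ : (∫ θ in (0:ℝ)..Real.pi, ∫ φ in (0:ℝ)..(2*Real.pi),
          ((Real.sin θ * u θ φ : ℝ):ℂ)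
            * (coherentState n θ φ j * (starRingEnd ℂ) (coherentState n θ φ k)))
          = ∫ θ in (0:ℝ)..Real.pi, ∫ φ in (0:ℝ)..(2*Real.pi),
            ((Real.sin θ : ℝ) : ℂ) * ((u θ φ : ℝ) : ℂ)
              * (coherentState n θ φ j * (starRingEnd ℂ) (coherentState n θ φ k)) := by
        apply intervalIntegral.integral_congr; intro θ _
        apply intervalIntegral.integral_congr; intro φ _
        push_cast; ring
      rw [hJ, hupper j k, ← mul_assoc, hc, one_mul]
    simp only [hI] at h
    have h3 : (∑ j, ∑ k, (starRingEnd ℂ) (hH.eigenvectorBasis i j) * hH.eigenvectorBasis i k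
        * (((4*Real.pi/((n:ℝ)+1):ℝ):ℂ) * H j k))
        = ((4*Real.pi/((n:ℝ)+1):ℝ):ℂ) * ∑ j, (starRingEnd ℂ) (hH.eigenvectorBasis i j)
            * ∑ k, H j k * hH.eigenvectorBasis i k := by
      rw [Finset.mul_sum]
      apply Finset.sum_congr rfl; intro j _
      rw [Finset.mul_sum, Finset.mul_sum]
      apply Finset.sum_congr rfl; intro k _
      ring
    rw [h3, heig i, ← Complex.ofReal_mul] at h
    have h4 := Complex.ofReal_injective h
    calc (∫ θ in (0:ℝ)..Real.pi, ∫ φ in (0:ℝ)..(2*Real.pi),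
        Real.sin θ * (u θ φ * cohW n (fun j => hH.eigenvectorBasis i j) θ φ))
        = ∫ θ in (0:ℝ)..Real.pi, ∫ φ in (0:ℝ)..(2*Real.pi), (Real.sin θ * u θ φ)
            * Complex.normSq (∑ j, (starRingEnd ℂ) (hH.eigenvectorBasis i j)
              * coherentState n θ φ j) := by
          apply double_congr; intro θ φ
          unfold cohW
          ring
      _ = 4*Real.pi/(n+1) * hH.eigenvalues i := h4
  -- per-eigenvector inequality
  have hkey : ∀ i, Real.exp (-β * hH.eigenvalues i) ≤ ((n:ℝ)+1)/(4*Real.pi)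
      * ∫ θ in (0:ℝ)..Real.pi, ∫ φ in (0:ℝ)..(2*Real.pi),
          Real.sin θ * (Real.exp (-β * u θ φ)
            * cohW n (fun j => hH.eigenvectorBasis i j) θ φ) :=
    fun i => per_vector n u hu β _ (hH.eigenvalues i) (hres i) (hsym i)
  -- summing up
  have hGc : ∀ i : Fin (n+1), Continuous fun p : ℝ×ℝ => Real.sin p.1
      * (Real.exp (-β * u p.1 p.2) * cohW n (fun j => hH.eigenvectorBasis i j) p.1 p.2) :=
    fun i => (Real.continuous_sin.comp continuous_fst).mul
      ((Real.continuous_exp.comp (continuous_const.mul hu)).mul (cohW_cont n _))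
  have hswap : (∑ i, ∫ θ in (0:ℝ)..Real.pi, ∫ φ in (0:ℝ)..(2*Real.pi),
      Real.sin θ * (Real.exp (-β * u θ φ)
        * cohW n (fun j => hH.eigenvectorBasis i j) θ φ))
      = ∫ θ in (0:ℝ)..Real.pi, ∫ φ in (0:ℝ)..(2*Real.pi),
          Real.sin θ * Real.exp (-β * u θ φ) := by
    rw [← double_sum_swap _ hGc]
    apply double_congr; intro θ φ
    calc ∑ i, Real.sin θ * (Real.exp (-β * u θ φ)
          * cohW n (fun j => hH.eigenvectorBasis i j) θ φ)
        = Real.sin θ * Real.exp (-β * u θ φ)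
            * ∑ i, cohW n (fun j => hH.eigenvectorBasis i j) θ φ := by
          rw [Finset.mul_sum]
          exact Finset.sum_congr rfl fun i _ => by ring
      _ = Real.sin θ * Real.exp (-β * u θ φ) := by
          rw [sum_cohW n hH.eigenvectorBasis θ φ, mul_one]
  have hsum : ∑ i, Real.exp (-β * hH.eigenvalues i)
      ≤ ((n:ℝ)+1)/(4*Real.pi) * ∫ θ in (0:ℝ)..Real.pi, ∫ φ in (0:ℝ)..(2*Real.pi),
          Real.sin θ * Real.exp (-β * u θ φ) := by
    calc ∑ i, Real.exp (-β * hH.eigenvalues i)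
        ≤ ∑ i, ((n:ℝ)+1)/(4*Real.pi)
            * ∫ θ in (0:ℝ)..Real.pi, ∫ φ in (0:ℝ)..(2*Real.pi),
              Real.sin θ * (Real.exp (-β * u θ φ)
                * cohW n (fun j => hH.eigenvectorBasis i j) θ φ) :=
          Finset.sum_le_sum fun i _ => hkey i
      _ = ((n:ℝ)+1)/(4*Real.pi) * ∑ i, ∫ θ in (0:ℝ)..Real.pi, ∫ φ in (0:ℝ)..(2*Real.pi),
            Real.sin θ * (Real.exp (-β * u θ φ)
              * cohW n (fun j => hH.eigenvectorBasis i j) θ φ) := by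
          rw [Finset.mul_sum]
      _ = _ := by rw [hswap]
  rw [htrre, div_le_iff₀ (by positivity : (0:ℝ) < (n:ℝ)+1)]
  calc ∑ i, Real.exp (-β * hH.eigenvalues i)
      ≤ ((n:ℝ)+1)/(4*Real.pi) * ∫ θ in (0:ℝ)..Real.pi, ∫ φ in (0:ℝ)..(2*Real.pi),
          Real.sin θ * Real.exp (-β * u θ φ) := hsum
    _ = (1 / (4 * Real.pi))
        * (∫ θ in (0 : ℝ)..Real.pi, ∫ φ in (0 : ℝ)..(2 * Real.pi),
            Real.sin θ * Real.exp (-β * u θ φ)) * ((n:ℝ) + 1) := by ring
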